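/- Let K ≥ 1 and R ≥ 1 with R ≤ K, let U_1, …, U_R be an orthonormal family in the Euclidean space ℝ^K, let a ≥ 3 be an odd integer, and let λ_1, …, λ_R be positive reals. Suppose J : [0,∞) → ℝ^K is a solution of dJ/dt = G(J), where G(J) = ∑_{r=1}^R λ_r ⟨U_r, J⟩^a U_r − ( ∑_{r=1}^R λ_r ⟨U_r, J⟩^{a+1} ) J, and suppose ∑_{r=1}^R ⟨U_r, J(0)⟩^2 > 0. Then ‖J(t)‖ → 1 as t → ∞: the unit sphere is attracting for the synaptic weight dynamics. -/

import Mathlib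

open Filter Topology

/-- For odd `a > 1` and positive eigenvalues, the unit sphere attracts every
solution of the odeco mean-field Hebbian dynamics with nonzero initial loading. -/
theorem stmt9 (K R : ℕ) (hK : 1 ≤ K) (hR : 1 ≤ R) (hRK : R ≤ K)
    (U : Fin R → EuclideanSpace ℝ (Fin K)) (hU : Orthonormal ℝ U)
    (a : ℕ) (ha : 3 ≤ a) (haodd : Odd a)
    (lam : Fin R → ℝ) (hpos : ∀ i, 0 < lam i)
    (J : ℝ → EuclideanSpace ℝ (Fin K))
    (hode : ∀ t ≥ (0 : ℝ), HasDerivAt J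
      ((∑ r, (lam r * (inner ℝ (U r) (J t) : ℝ) ^ a) • U r)
        - (∑ r, lam r * (inner ℝ (U r) (J t) : ℝ) ^ (a + 1)) • J t) t)
    (h0 : 0 < ∑ r, (inner ℝ (U r) (J 0) : ℝ) ^ 2) :
    Tendsto (fun t => ‖J t‖) atTop (𝓝 1) := by
  classical
  have hne : Nonempty (Fin R) := ⟨⟨0, hR⟩⟩
  set x : Fin R → ℝ → ℝ := fun r t => (inner ℝ (U r) (J t) : ℝ) with hxdef
  set S : ℝ → ℝ := fun t => ∑ r, lam r * x r t ^ (a + 1) with hSdef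
  set n : ℝ → ℝ := fun t => (inner ℝ (J t) (J t) : ℝ) with hndef
  set P : ℝ → ℝ := fun t => ∑ r, x r t ^ 2 with hPdef
  -- inner product with orthonormal family
  have hinner : ∀ (r : Fin R) (c : Fin R → ℝ),
      (inner ℝ (U r) (∑ s, c s • U s) : ℝ) = c r := by
    intro r c
    rw [inner_sum]
    rw [Finset.sum_eq_single r]
    · rw [real_inner_smul_right, orthonormal_iff_ite.mp hU, if_pos rfl, mul_one]
    · intro s _ hs
      rw [real_inner_smul_right, orthonormal_iff_ite.mp hU, if_neg (Ne.symm hs), mul_zero]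
    · intro h; exact absurd (Finset.mem_univ r) h
  -- derivative of x r
  have hx' : ∀ t ≥ (0:ℝ), ∀ r, HasDerivAt (x r)
      (lam r * x r t ^ a - S t * x r t) t := by
    intro t ht r
    have h := (hasDerivAt_const t (U r)).inner ℝ (hode t ht)
    simp only [inner_zero_left, add_zero] at h
    refine h.congr_deriv (Eq.symm ?_)
    rw [inner_sub_right, hinner, real_inner_smul_right]
  -- derivative of n
  have hn' : ∀ t ≥ (0:ℝ), HasDerivAt n (2 * S t * (1 - n t)) t := by
    intro t ht
    have h := (hode t ht).inner ℝ (hode t ht)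
    refine h.congr_deriv (Eq.symm ?_)
    have h1 : (inner ℝ (J t) ((∑ r, (lam r * x r t ^ a) • U r)
        - (∑ r, lam r * x r t ^ (a+1)) • J t) : ℝ) = S t - S t * n t := by
      rw [inner_sub_right, real_inner_smul_right, inner_sum]
      congr 1
      rw [hSdef]
      refine Finset.sum_congr rfl fun r _ => ?_
      rw [real_inner_smul_right, real_inner_comm]
      rw [pow_succ]
      ring
    have h2 : (inner ℝ ((∑ r, (lam r * x r t ^ a) • U r)
        - (∑ r, lam r * x r t ^ (a+1)) • J t) (J t) : ℝ) = S t - S t * n t := by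
      rw [real_inner_comm]; exact h1
    rw [h1, h2]; ring
  -- derivative of P
  have hP' : ∀ t ≥ (0:ℝ), HasDerivAt P (2 * S t * (1 - P t)) t := by
    intro t ht
    have h : HasDerivAt P (∑ r, 2 * x r t ^ 1 * (lam r * x r t ^ a - S t * x r t)) t := by
      apply HasDerivAt.fun_sum
      intro r _
      have := (hx' t ht r).fun_pow 2
      exact this
    refine h.congr_deriv (Eq.symm ?_)
    have : ∀ r : Fin R, 2 * x r t ^ 1 * (lam r * x r t ^ a - S t * x r t)
        = 2 * (lam r * x r t ^ (a+1)) - 2 * S t * x r t ^ 2 := by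
      intro r; rw [pow_succ]; ring
    rw [Finset.sum_congr rfl fun r _ => this r, Finset.sum_sub_distrib,
      ← Finset.mul_sum, ← Finset.mul_sum]
    show 2 * S t * (1 - P t) = 2 * S t - 2 * S t * P t
    ring
  -- S is nonnegative
  have haev : Even (a + 1) := Odd.add_one haodd
  have hS0 : ∀ t, 0 ≤ S t := by
    intro t
    apply Finset.sum_nonneg
    intro r _
    exact mul_nonneg (hpos r).le (haev.pow_nonneg _)
  -- continuity
  have hJc : ContinuousOn J (Set.Ici 0) := fun t ht =>
    (hode t ht).continuousAt.continuousWithinAt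
  have hxc : ∀ r, ContinuousOn (x r) (Set.Ici 0) := fun r =>
    continuousOn_const.inner hJc
  have hSc : ContinuousOn S (Set.Ici 0) := by
    apply continuousOn_finset_sum
    intro r _
    exact continuousOn_const.mul ((hxc r).pow _)
  set I : ℝ → ℝ := fun t => ∫ s in (0:ℝ)..t, 2 * S s with hIdef
  have h2Sc : ContinuousOn (fun s => 2 * S s) (Set.Ici 0) := continuousOn_const.mul hSc
  have hint : ∀ t ≥ (0:ℝ), IntervalIntegrable (fun s => 2 * S s) MeasureTheory.volume 0 t := by
    intro t ht
    apply ContinuousOn.intervalIntegrable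
    apply h2Sc.mono
    rw [Set.uIcc_of_le ht]
    exact Set.Icc_subset_Ici_self
  have hI' : ∀ t ≥ (0:ℝ), HasDerivWithinAt I (2 * S t) (Set.Ici 0) t := by
    intro t ht
    rcases eq_or_lt_of_le ht with h|h
    · subst h
      apply intervalIntegral.integral_hasDerivWithinAt_right (hint 0 le_rfl)
        (t := Set.Ioi (0:ℝ))
      · exact ⟨Set.Ici 0, Filter.mem_of_superset self_mem_nhdsWithin Set.Ioi_subset_Ici_self,
          (h2Sc.aestronglyMeasurable measurableSet_Ici)⟩
      · exact (h2Sc 0 Set.self_mem_Ici).mono Set.Ioi_subset_Ici_self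
    · have hmem : Set.Ici (0:ℝ) ∈ 𝓝 t := Ici_mem_nhds h
      have hca : ContinuousAt (fun s => 2 * S s) t := h2Sc.continuousAt hmem
      have : HasDerivAt I (2 * S t) t := by
        apply intervalIntegral.integral_hasDerivAt_right (hint t h.le)
        · exact ⟨Set.Ici 0, hmem, h2Sc.aestronglyMeasurable measurableSet_Ici⟩
        · exact hca
      exact this.hasDerivWithinAt
  -- integrating factor: any solution of f' = 2S(1-f) satisfies f t - 1 = (f 0 - 1) exp(-I t)
  have key : ∀ f : ℝ → ℝ, (∀ t ≥ (0:ℝ), HasDerivAt f (2 * S t * (1 - f t)) t) →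
      ∀ t ≥ (0:ℝ), f t - 1 = (f 0 - 1) * Real.exp (-(I t)) := by
    intro f hf
    set y : ℝ → ℝ := fun t => (f t - 1) * Real.exp (I t) with hydef
    have hy' : ∀ t ∈ Set.Ici (0:ℝ), HasDerivWithinAt y 0 (Set.Ici 0) t := by
      intro t ht
      have hexp : HasDerivWithinAt (fun u => Real.exp (I u)) (Real.exp (I t) * (2 * S t))
          (Set.Ici 0) t :=
        (Real.hasDerivAt_exp (I t)).comp_hasDerivWithinAt t (hI' t ht)
      have h := ((hf t ht).hasDerivWithinAt.sub_const 1).mul hexp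
      refine h.congr_deriv (Eq.symm ?_)
      ring
    have hdiff : DifferentiableOn ℝ y (Set.Ici 0) := fun t ht =>
      (hy' t ht).differentiableWithinAt
    have hfd : ∀ t ∈ Set.Ici (0:ℝ), fderivWithin ℝ y (Set.Ici 0) t = 0 := by
      intro t ht
      have := (hy' t ht).hasFDerivWithinAt.fderivWithin (uniqueDiffOn_Ici 0 t ht)
      rw [this]
      exact ContinuousLinearMap.ext fun u => by simp
    intro t ht
    have hconst : y t = y 0 :=
      (convex_Ici (0:ℝ)).is_const_of_fderivWithin_eq_zero hdiff hfd ht Set.self_mem_Ici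
    have hy0 : y 0 = f 0 - 1 := by
      simp [hydef, hIdef, intervalIntegral.integral_same]
    rw [hy0] at hconst
    rw [Real.exp_neg, ← hconst, hydef]
    field_simp
  have hnkey := key n hn'
  have hPkey := key P hP'
  -- positivity of initial loading
  have hP0 : 0 < P 0 := h0
  set m : ℝ := min (P 0) 1 with hmdef
  have hm : 0 < m := lt_min hP0 one_pos
  have hIpos : ∀ t ≥ (0:ℝ), 0 ≤ I t := by
    intro t ht
    apply intervalIntegral.integral_nonneg ht
    intro s _
    exact mul_nonneg (by norm_num) (hS0 s)
  have hPm : ∀ t ≥ (0:ℝ), m ≤ P t := by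
    intro t ht
    have h1 := hPkey t ht
    have he0 : 0 < Real.exp (-(I t)) := Real.exp_pos _
    have he1 : Real.exp (-(I t)) ≤ 1 :=
      Real.exp_le_one_iff.mpr (neg_nonpos.mpr (hIpos t ht))
    rcases le_total (P 0) 1 with h|h
    · have hmle : m ≤ P 0 := min_le_left _ _
      nlinarith
    · have hmle : m ≤ 1 := min_le_right _ _
      nlinarith
  -- uniform lower bound on S
  set lmin : ℝ := Finset.univ.inf' Finset.univ_nonempty lam with hlmindef
  have hlmin_le : ∀ r, lmin ≤ lam r := fun r => Finset.inf'_le lam (Finset.mem_univ r)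
  have hlmin : 0 < lmin := (Finset.lt_inf'_iff _).mpr fun r _ => hpos r
  obtain ⟨k, hk⟩ := haodd
  have hk1 : a + 1 = 2 * (k + 1) := by omega
  have hRpos : (0:ℝ) < (R:ℝ) := by exact_mod_cast hR
  set σ : ℝ := lmin * (m ^ (k+1) / (R:ℝ)^k) with hsdef
  have hσ : 0 < σ := by positivity
  have hSσ : ∀ t ≥ (0:ℝ), σ ≤ S t := by
    intro t ht
    have hxp : ∀ r : Fin R, x r t ^ (a+1) = (x r t ^ 2) ^ (k+1) := by
      intro r; rw [hk1, pow_mul]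
    have hjensen : P t ^ (k+1) / (R:ℝ)^k ≤ ∑ r, (x r t ^ 2) ^ (k+1) := by
      have := pow_sum_div_card_le_sum_pow
        (s := Finset.univ) (f := fun r : Fin R => x r t ^ 2)
        (fun i _ => sq_nonneg _) k
      simpa [Finset.card_univ] using this
    have hstep1 : σ ≤ lmin * (P t ^ (k+1) / (R:ℝ)^k) := by
      rw [hsdef]
      have : m ^ (k+1) ≤ P t ^ (k+1) := pow_le_pow_left₀ hm.le (hPm t ht) _
      gcongr
    have hstep2 : lmin * (P t ^ (k+1) / (R:ℝ)^k) ≤ lmin * ∑ r, (x r t ^ 2) ^ (k+1) := by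
      gcongr
    have hstep3 : lmin * ∑ r, (x r t ^ 2) ^ (k+1) ≤ S t := by
      rw [Finset.mul_sum, hSdef]
      apply Finset.sum_le_sum
      intro r _
      rw [hxp r]
      exact mul_le_mul_of_nonneg_right (hlmin_le r) (by positivity)
    linarith
  -- linear lower bound on I
  have hIlb : ∀ t ≥ (0:ℝ), 2 * σ * t ≤ I t := by
    intro t ht
    have hmono : ∫ s in (0:ℝ)..t, (2*σ) ≤ ∫ s in (0:ℝ)..t, 2 * S s := by
      apply intervalIntegral.integral_mono_on ht intervalIntegrable_const (hint t ht)
      intro s hs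
      have := hSσ s hs.1
      linarith
    rw [intervalIntegral.integral_const, sub_zero, smul_eq_mul] at hmono
    calc 2 * σ * t = t * (2 * σ) := by ring
    _ ≤ I t := hmono
  -- exp(-I t) → 0
  have hexp2 : Tendsto (fun t : ℝ => Real.exp (-(2 * σ * t))) atTop (𝓝 0) := by
    apply Real.tendsto_exp_atBot.comp
    apply tendsto_neg_atBot_iff.mpr
    exact (tendsto_const_mul_atTop_of_pos (by linarith)).mpr tendsto_id
  have hE : Tendsto (fun t => Real.exp (-(I t))) atTop (𝓝 0) := by
    apply tendsto_of_tendsto_of_tendsto_of_le_of_le' tendsto_const_nhds hexp2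
    · exact Eventually.of_forall fun t => (Real.exp_pos _).le
    · filter_upwards [eventually_ge_atTop (0:ℝ)] with t ht
      exact Real.exp_le_exp.mpr (neg_le_neg (hIlb t ht))
  -- n → 1
  have hn1 : Tendsto n atTop (𝓝 1) := by
    have h1 : Tendsto (fun t => 1 + (n 0 - 1) * Real.exp (-(I t))) atTop
        (𝓝 (1 + (n 0 - 1) * 0)) :=
      tendsto_const_nhds.add (tendsto_const_nhds.mul hE)
    rw [mul_zero, add_zero] at h1
    apply h1.congr'
    filter_upwards [eventually_ge_atTop (0:ℝ)] with t ht
    have := hnkey t ht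
    linarith
  -- conclude
  have hno : ∀ t, n t = ‖J t‖^2 := fun t => real_inner_self_eq_norm_sq _
  have hsq : Tendsto (fun t => Real.sqrt (n t)) atTop (𝓝 1) := by
    have := (Real.continuous_sqrt.tendsto 1).comp hn1
    simpa [Function.comp_def] using this
  apply hsq.congr
  intro t
  rw [hno t, Real.sqrt_sq (norm_nonneg _)]
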